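/- Let κ > 0, φ > 0 and ν > 8, and set γ_k = (2^k · ν(ν−1)⋯(ν−k+1))^{−1} = (2^k ∏_{i=0}^{k−1}(ν−i))^{−1}. Then for every h = (h₁,h₂) ∈ ℝ² with h ≠ 0, the eighth-order mixed partial derivative of the Matérn covariance function satisfies ∂⁸C_κ^ν/∂h₁⁴∂h₂⁴ (h) = 9γ₄·C_κ^{ν−4}(h) − 18γ₅·(h₁²+h₂²)·C_κ^{ν−5}(h) + 3γ₆·(h₁⁴ + h₂⁴ + 12h₁²h₂²)·C_κ^{ν−6}(h) − 6γ₇·h₁²h₂²·(h₁²+h₂²)·C_κ^{ν−7}(h) + γ₈·h₁⁴h₂⁴·C_κ^{ν−8}(h). (This is the covariance function of Example 4 with b₁ = b₂ = 0, B₁ = (1,0)^⊤, B₂ = (0,1)^⊤, arising from the nested SPDE (κ²−Δ)^{α/2}X = (B₁^⊤∇)²(B₂^⊤∇)²𝒲.) -/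

import Mathlib

open Real

/-- The modified Bessel function of the second kind,
`K_ν(x) = ∫₀^∞ exp(−x cosh t) cosh(νt) dt`. -/
noncomputable def besselK (ν x : ℝ) : ℝ :=
  ∫ t in Set.Ioi (0 : ℝ), Real.exp (-x * Real.cosh t) * Real.cosh (ν * t)

/-- The Matérn covariance function on `ℝ²` with scale `κ`, variance parameter `φ²` and
shape parameter `ν`:
`C_κ^ν(h) = (2^{1−ν}φ²/(4π Γ(ν+1) κ^{2ν})) (κ‖h‖)^ν K_ν(κ‖h‖)`. -/
noncomputable def matern (κ φ ν : ℝ) (h : EuclideanSpace ℝ (Fin 2)) : ℝ :=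
  2 ^ (1 - ν) * φ ^ 2 / (4 * π * Real.Gamma (ν + 1) * κ ^ (2 * ν)) *
    (κ * ‖h‖) ^ ν * besselK ν (κ * ‖h‖)

/-- The partial derivative of `g : ℝ² → ℝ` in the `i`-th coordinate direction. -/
noncomputable def pderiv2 (i : Fin 2) (g : EuclideanSpace ℝ (Fin 2) → ℝ) :
    EuclideanSpace ℝ (Fin 2) → ℝ :=
  fun x => fderiv ℝ g x (EuclideanSpace.single i 1)

open MeasureTheory Set Filter Topology

lemma cosh_quad (t : ℝ) (ht : 0 ≤ t) : 1 + t ^ 2 / 2 ≤ Real.cosh t := by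
  have h1 : Real.cosh t = 1 + 2 * Real.sinh (t / 2) ^ 2 := by
    have := Real.cosh_two_mul (t / 2)
    have h2 := Real.cosh_sq (t / 2)
    rw [show 2 * (t/2) = t by ring] at this
    rw [this, h2]; ring
  have h3 : t / 2 ≤ Real.sinh (t / 2) := Real.self_le_sinh_iff.mpr (by positivity)
  nlinarith [Real.sinh_nonneg_iff.mpr (show (0:ℝ) ≤ t/2 by positivity)]

lemma eventually_exp_cosh_le (c x : ℝ) (hx : 0 < x) :
    ∀ᶠ t in atTop, Real.exp (c * t - x * Real.cosh t) ≤ Real.exp (-t) := by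
  filter_upwards [Filter.eventually_ge_atTop (max 1 (2 * (|c| + 1) / x))] with t ht
  have ht1 : (1:ℝ) ≤ t := le_trans (le_max_left _ _) ht
  have ht2 : 2 * (|c| + 1) / x ≤ t := le_trans (le_max_right _ _) ht
  have ht0 : 0 ≤ t := by linarith
  have hq : 1 + t ^ 2 / 2 ≤ Real.cosh t := cosh_quad t ht0
  have hkey : (|c| + 1) * t ≤ x * Real.cosh t := by
    have h4 : 2 * (|c| + 1) ≤ x * t := by
      rw [div_le_iff₀ hx] at ht2; linarith
    nlinarith [abs_nonneg c]
  have h5 := le_abs_self c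
  exact Real.exp_le_exp.mpr (by nlinarith [abs_nonneg c])

lemma integrableOn_exp_cosh (c x : ℝ) (hx : 0 < x) :
    IntegrableOn (fun t => Real.exp (c * t - x * Real.cosh t)) (Ioi (0:ℝ)) := by
  apply integrable_of_isBigO_exp_neg (b := 1) one_pos
  · fun_prop
  · rw [Asymptotics.isBigO_iff]
    refine ⟨1, ?_⟩
    filter_upwards [eventually_exp_cosh_le c x hx] with t ht
    simpa [abs_exp] using ht

lemma cosh_le_exp_abs (y : ℝ) : Real.cosh y ≤ Real.exp |y| := by
  rw [Real.cosh_eq]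
  have h1 : Real.exp y ≤ Real.exp |y| := Real.exp_le_exp.mpr (le_abs_self y)
  have h2 : Real.exp (-y) ≤ Real.exp |y| := Real.exp_le_exp.mpr (neg_le_abs y)
  linarith

lemma abs_sinh_le_cosh (y : ℝ) : |Real.sinh y| ≤ Real.cosh y := by
  have h := Real.cosh_sq y
  have := Real.cosh_pos y
  rw [abs_le]; constructor <;> nlinarith [sq_nonneg (Real.sinh y - Real.cosh y), sq_nonneg (Real.sinh y + Real.cosh y)]

lemma integrableOn_of_cosh_bound {f : ℝ → ℝ} (c x : ℝ) (hx : 0 < x) (hf : Continuous f)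
    (hb : ∀ t, 0 ≤ t → |f t| ≤ Real.exp (c * t - x * Real.cosh t)) :
    IntegrableOn f (Ioi (0:ℝ)) := by
  refine (integrableOn_exp_cosh c x hx).mono' hf.aestronglyMeasurable ?_
  rw [ae_restrict_iff' measurableSet_Ioi]
  filter_upwards with t ht
  simpa using hb t (le_of_lt ht)

lemma bound1 (ν x : ℝ) (hx : 0 < x) (t : ℝ) (ht : 0 ≤ t) :
    |Real.exp (-x * Real.cosh t) * Real.cosh (ν * t)| ≤ Real.exp (|ν| * t - x * Real.cosh t) := by
  rw [abs_mul, abs_exp, abs_of_pos (Real.cosh_pos _)]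
  have h1 : Real.cosh (ν * t) ≤ Real.exp (|ν| * t) := by
    calc Real.cosh (ν * t) ≤ Real.exp |ν * t| := cosh_le_exp_abs _
    _ = Real.exp (|ν| * t) := by rw [abs_mul, abs_of_nonneg ht]
  calc Real.exp (-x * Real.cosh t) * Real.cosh (ν * t)
      ≤ Real.exp (-x * Real.cosh t) * Real.exp (|ν| * t) :=
        mul_le_mul_of_nonneg_left h1 (Real.exp_nonneg _)
    _ = Real.exp (|ν| * t - x * Real.cosh t) := by rw [← Real.exp_add]; ring_nf

lemma integrable1 (ν x : ℝ) (hx : 0 < x) :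
    IntegrableOn (fun t => Real.exp (-x * Real.cosh t) * Real.cosh (ν * t)) (Ioi (0:ℝ)) :=
  integrableOn_of_cosh_bound |ν| x hx (by fun_prop) (bound1 ν x hx)

lemma bound2 (ν x : ℝ) (hx : 0 < x) (t : ℝ) (ht : 0 ≤ t) :
    |Real.cosh t * (Real.exp (-x * Real.cosh t) * Real.cosh (ν * t))|
      ≤ Real.exp ((|ν| + 1) * t - x * Real.cosh t) := by
  rw [abs_mul, abs_of_pos (Real.cosh_pos _)]
  have h2 : Real.cosh t ≤ Real.exp t := by
    calc Real.cosh t ≤ Real.exp |t| := cosh_le_exp_abs _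
    _ = Real.exp t := by rw [abs_of_nonneg ht]
  calc Real.cosh t * |Real.exp (-x * Real.cosh t) * Real.cosh (ν * t)|
      ≤ Real.exp t * Real.exp (|ν| * t - x * Real.cosh t) := by
        apply mul_le_mul h2 (bound1 ν x hx t ht) (abs_nonneg _) (Real.exp_nonneg _)
    _ = Real.exp ((|ν| + 1) * t - x * Real.cosh t) := by rw [← Real.exp_add]; ring_nf

lemma integrable2 (ν x : ℝ) (hx : 0 < x) :
    IntegrableOn (fun t => Real.cosh t * (Real.exp (-x * Real.cosh t) * Real.cosh (ν * t)))
      (Ioi (0:ℝ)) :=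
  integrableOn_of_cosh_bound (|ν| + 1) x hx (by fun_prop) (bound2 ν x hx)

lemma bound3 (ν x : ℝ) (hx : 0 < x) (t : ℝ) (ht : 0 ≤ t) :
    |Real.sinh t * (Real.exp (-x * Real.cosh t) * Real.sinh (ν * t))|
      ≤ Real.exp ((|ν| + 1) * t - x * Real.cosh t) := by
  have h1 : |Real.sinh t * (Real.exp (-x * Real.cosh t) * Real.sinh (ν * t))|
      ≤ |Real.cosh t * (Real.exp (-x * Real.cosh t) * Real.cosh (ν * t))| := by
    rw [abs_mul, abs_mul, abs_mul, abs_mul]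
    apply mul_le_mul (by rw [abs_of_pos (Real.cosh_pos t)]; exact abs_sinh_le_cosh t)
    · apply mul_le_mul_of_nonneg_left _ (abs_nonneg _)
      rw [abs_of_pos (Real.cosh_pos _)]; exact abs_sinh_le_cosh _
    · positivity
    · positivity
  exact h1.trans (bound2 ν x hx t ht)

lemma integrable3 (ν x : ℝ) (hx : 0 < x) :
    IntegrableOn (fun t => Real.sinh t * (Real.exp (-x * Real.cosh t) * Real.sinh (ν * t)))
      (Ioi (0:ℝ)) :=
  integrableOn_of_cosh_bound (|ν| + 1) x hx (by fun_prop) (bound3 ν x hx)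

lemma cosh_mul_cosh (a b : ℝ) :
    Real.cosh a * Real.cosh b = (Real.cosh (a + b) + Real.cosh (a - b)) / 2 := by
  rw [Real.cosh_add, Real.cosh_sub]; ring

lemma sinh_mul_sinh (a b : ℝ) :
    Real.sinh a * Real.sinh b = (Real.cosh (a + b) - Real.cosh (a - b)) / 2 := by
  rw [Real.cosh_add, Real.cosh_sub]; ring

lemma besselK_hasDerivAt (ν x : ℝ) (hx : 0 < x) :
    HasDerivAt (besselK ν) (-((besselK (ν + 1) x + besselK (ν - 1) x) / 2)) x := by
  have key := hasDerivAt_integral_of_dominated_loc_of_deriv_le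
    (μ := volume.restrict (Ioi (0:ℝ)))
    (F := fun y t => Real.exp (-y * Real.cosh t) * Real.cosh (ν * t))
    (F' := fun y t => -(Real.cosh t * (Real.exp (-y * Real.cosh t) * Real.cosh (ν * t))))
    (x₀ := x) (bound := fun t => Real.exp ((|ν| + 1) * t - (x / 2) * Real.cosh t))
    (Metric.ball_mem_nhds x (half_pos hx))
    (Filter.Eventually.of_forall fun y => Continuous.aestronglyMeasurable (by fun_prop))
    (integrable1 ν x hx)
    (Continuous.aestronglyMeasurable (by fun_prop))
    ?_ ((integrableOn_exp_cosh (|ν| + 1) (x / 2) (half_pos hx)))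
    ?_
  · have h2 : (∫ t in Ioi (0:ℝ), -(Real.cosh t * (Real.exp (-x * Real.cosh t) * Real.cosh (ν * t))))
        = -((besselK (ν + 1) x + besselK (ν - 1) x) / 2) := by
      rw [integral_neg]
      congr 1
      have congr1 : ∀ t : ℝ, Real.cosh t * (Real.exp (-x * Real.cosh t) * Real.cosh (ν * t))
          = (Real.exp (-x * Real.cosh t) * Real.cosh ((ν+1) * t)) / 2
            + (Real.exp (-x * Real.cosh t) * Real.cosh ((ν-1) * t)) / 2 := by
        intro t
        have := cosh_mul_cosh (ν * t) t
        rw [show ν * t + t = (ν+1)*t by ring, show ν * t - t = (ν-1)*t by ring] at this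
        linear_combination Real.exp (-x * Real.cosh t) * this
      rw [MeasureTheory.setIntegral_congr_fun measurableSet_Ioi
        (fun t _ => congr1 t)]
      rw [integral_add ((integrable1 (ν+1) x hx).div_const 2) ((integrable1 (ν-1) x hx).div_const 2)]
      rw [integral_div, integral_div]
      unfold besselK; ring
    rw [← h2]
    exact key.2
  · -- bound
    rw [ae_restrict_iff' measurableSet_Ioi]
    filter_upwards with t ht
    intro y hy
    simp only [Metric.mem_ball, Real.dist_eq] at hy
    have hy2 : x / 2 < y := by cases abs_lt.mp hy; linarith
    have ht0 : (0:ℝ) ≤ t := le_of_lt ht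
    calc ‖-(Real.cosh t * (Real.exp (-y * Real.cosh t) * Real.cosh (ν * t)))‖
        = |Real.cosh t * (Real.exp (-y * Real.cosh t) * Real.cosh (ν * t))| := by
          rw [norm_neg]; rfl
      _ ≤ Real.exp ((|ν| + 1) * t - y * Real.cosh t) := bound2 ν y (by linarith [half_pos hx]) t ht0
      _ ≤ Real.exp ((|ν| + 1) * t - (x/2) * Real.cosh t) := by
          apply Real.exp_le_exp.mpr
          have := Real.cosh_pos t
          nlinarith
  · -- differentiability in y
    filter_upwards with t
    intro y hy
    have h : HasDerivAt (fun y : ℝ => Real.exp (-y * Real.cosh t) * Real.cosh (ν * t))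
        (-(Real.cosh t * (Real.exp (-y * Real.cosh t) * Real.cosh (ν * t)))) y := by
      have h1 : HasDerivAt (fun y : ℝ => -y * Real.cosh t) (-Real.cosh t) y := by
        simpa using (hasDerivAt_id y).neg.mul_const (Real.cosh t)
      have h2 := h1.exp
      have h3 := h2.mul_const (Real.cosh (ν * t))
      refine h3.congr_deriv ?_
      ring
    exact h

lemma besselK_rec (ν x : ℝ) (hx : 0 < x) :
    besselK (ν + 1) x - besselK (ν - 1) x = 2 * ν / x * besselK ν x := by
  set g : ℝ → ℝ := fun t => Real.exp (-x * Real.cosh t) * Real.sinh (ν * t) with hg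
  set g' : ℝ → ℝ := fun t =>
    (-x) * (Real.sinh t * (Real.exp (-x * Real.cosh t) * Real.sinh (ν * t)))
      + ν * (Real.exp (-x * Real.cosh t) * Real.cosh (ν * t)) with hg'
  have hderiv : ∀ t ∈ Ici (0:ℝ), HasDerivAt g (g' t) t := by
    intro t _
    have h1 : HasDerivAt (fun t : ℝ => -x * Real.cosh t) (-x * Real.sinh t) t :=
      (Real.hasDerivAt_cosh t).const_mul (-x)
    have h2 := h1.exp
    have h3 : HasDerivAt (fun t : ℝ => Real.sinh (ν * t)) (ν * Real.cosh (ν * t)) t := by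
      have := (Real.hasDerivAt_sinh (ν * t)).comp t ((hasDerivAt_id t).const_mul ν)
      exact this.congr_deriv (by ring)
    have h4 := h2.mul h3
    refine h4.congr_deriv ?_
    simp only [hg']
    ring
  have f'int : IntegrableOn g' (Ioi (0:ℝ)) := by
    exact ((integrable3 ν x hx).const_mul (-x)).add ((integrable1 ν x hx).const_mul ν)
  have htend : Tendsto g atTop (𝓝 0) := by
    apply squeeze_zero_norm'
    · filter_upwards [eventually_exp_cosh_le |ν| x hx, eventually_ge_atTop (0:ℝ)] with t h1 h2
      have hb : ‖g t‖ ≤ Real.exp (|ν| * t - x * Real.cosh t) := by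
        have : |Real.exp (-x * Real.cosh t) * Real.sinh (ν * t)|
            ≤ |Real.exp (-x * Real.cosh t) * Real.cosh (ν * t)| := by
          rw [abs_mul, abs_mul]
          apply mul_le_mul_of_nonneg_left _ (abs_nonneg _)
          rw [abs_of_pos (Real.cosh_pos _)]
          exact abs_sinh_le_cosh _
        exact this.trans (bound1 ν x hx t h2)
      exact hb.trans h1
    · exact Real.tendsto_exp_neg_atTop_nhds_zero
  have hFTC := integral_Ioi_of_hasDerivAt_of_tendsto' hderiv f'int htend
  have hg0 : g 0 = 0 := by simp [hg]
  rw [hg0, sub_zero] at hFTC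
  -- hFTC : ∫ t in Ioi 0, g' t = 0
  have hsplit : (∫ t in Ioi (0:ℝ), g' t)
      = (-x) * ((besselK (ν+1) x - besselK (ν-1) x) / 2) + ν * besselK ν x := by
    rw [integral_add ((integrable3 ν x hx).const_mul (-x)) ((integrable1 ν x hx).const_mul ν),
      integral_const_mul, integral_const_mul]
    congr 2
    have congr2 : ∀ t ∈ Ioi (0:ℝ), Real.sinh t * (Real.exp (-x * Real.cosh t) * Real.sinh (ν * t))
        = (Real.exp (-x * Real.cosh t) * Real.cosh ((ν+1) * t)) / 2
          - (Real.exp (-x * Real.cosh t) * Real.cosh ((ν-1) * t)) / 2 := by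
      intro t _
      have := sinh_mul_sinh (ν * t) t
      rw [show ν * t + t = (ν+1)*t by ring, show ν * t - t = (ν-1)*t by ring] at this
      linear_combination Real.exp (-x * Real.cosh t) * this
    rw [MeasureTheory.setIntegral_congr_fun measurableSet_Ioi congr2]
    rw [integral_sub ((integrable1 (ν+1) x hx).div_const 2) ((integrable1 (ν-1) x hx).div_const 2),
      integral_div, integral_div]
    unfold besselK; ring
  rw [hsplit] at hFTC
  field_simp
  linarith

lemma besselK_hasDerivAt' (ν x : ℝ) (hx : 0 < x) :
    HasDerivAt (besselK ν) (-besselK (ν-1) x - ν / x * besselK ν x) x := by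
  have h := besselK_hasDerivAt ν x hx
  have hr := besselK_rec ν x hx
  convert h using 1
  have hx' : x ≠ 0 := ne_of_gt hx
  field_simp at hr ⊢
  linarith

lemma hasDerivAt_rpow_besselK (ν x : ℝ) (hx : 0 < x) :
    HasDerivAt (fun y => y ^ ν * besselK ν y) (-(x ^ ν * besselK (ν-1) x)) x := by
  have h1 : HasDerivAt (fun y : ℝ => y ^ ν) (ν * x ^ (ν - 1)) x :=
    Real.hasDerivAt_rpow_const (Or.inl hx.ne')
  have h2 := h1.mul (besselK_hasDerivAt' ν x hx)
  refine h2.congr_deriv ?_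
  have hsub : x ^ (ν - 1) = x ^ ν / x := by
    rw [Real.rpow_sub hx, Real.rpow_one]
  rw [hsub]
  field_simp
  ring

abbrev E2 := EuclideanSpace ℝ (Fin 2)

lemma hasFDerivAt_norm2 (x : E2) (hx : x ≠ 0) :
    HasFDerivAt (fun y : E2 => ‖y‖) (‖x‖⁻¹ • innerSL ℝ x) x := by
  have h1 : HasFDerivAt (fun y : E2 => ‖y‖ ^ 2) (2 • innerSL ℝ x) x :=
    (hasStrictFDerivAt_norm_sq x).hasFDerivAt
  have hnx : (0:ℝ) < ‖x‖ := norm_pos_iff.mpr hx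
  have h2 : HasDerivAt Real.sqrt (1 / (2 * Real.sqrt (‖x‖ ^ 2))) (‖x‖ ^ 2) :=
    Real.hasDerivAt_sqrt (by positivity)
  have h3 := h2.comp_hasFDerivAt x h1
  have h4 : (fun y : E2 => Real.sqrt (‖y‖ ^ 2)) = fun y : E2 => ‖y‖ := by
    funext y; rw [Real.sqrt_sq (norm_nonneg y)]
  rw [Function.comp_def, h4] at h3
  refine h3.congr_fderiv ?_
  ext y
  simp only [ContinuousLinearMap.coe_smul', Pi.smul_apply, smul_eq_mul,
    Real.sqrt_sq (norm_nonneg x), two_smul, ContinuousLinearMap.add_apply]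
  field_simp
  ring

lemma matern_hasFDerivAt (κ φ μ : ℝ) (hκ : 0 < κ) (hμ : 0 < μ) (x : E2) (hx : x ≠ 0) :
    HasFDerivAt (matern κ φ μ) ((-(2*μ)⁻¹ * matern κ φ (μ-1) x) • innerSL ℝ x) x := by
  have hnx : (0:ℝ) < ‖x‖ := norm_pos_iff.mpr hx
  have hz : (0:ℝ) < κ * ‖x‖ := by positivity
  set A : ℝ := 2 ^ (1 - μ) * φ ^ 2 / (4 * π * Real.Gamma (μ + 1) * κ ^ (2 * μ)) with hA
  have h1 := hasDerivAt_rpow_besselK μ (κ * ‖x‖) hz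
  have hg : HasDerivAt (fun r : ℝ => κ * r) κ ‖x‖ := by
    simpa using (hasDerivAt_id ‖x‖).const_mul κ
  have h2 : HasDerivAt (fun r : ℝ => (κ*r)^μ * besselK μ (κ*r))
      (-((κ*‖x‖)^μ * besselK (μ-1) (κ*‖x‖)) * κ) ‖x‖ := h1.comp ‖x‖ hg
  have h3 := (h2.const_mul A).comp_hasFDerivAt x (hasFDerivAt_norm2 x hx)
  have h4 : (fun y : E2 => A * ((κ*‖y‖)^μ * besselK μ (κ*‖y‖))) = matern κ φ μ := by
    funext y; simp only [matern, hA]; ring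
  rw [Function.comp_def, h4] at h3
  refine h3.congr_fderiv ?_
  rw [smul_smul]
  congr 1
  -- scalar identity
  have hzm : (κ*‖x‖)^(μ-1) = (κ*‖x‖)^μ / (κ*‖x‖) := by
    rw [Real.rpow_sub hz, Real.rpow_one]
  have h2a : (2:ℝ)^(1-(μ-1)) = 2*(2:ℝ)^(1-μ) := by
    rw [show 1-(μ-1) = 1+(1-μ) by ring, Real.rpow_add two_pos, Real.rpow_one]
  have hkk : κ^((1:ℝ)+1) = κ * κ := by
    rw [Real.rpow_add hκ, Real.rpow_one]
  have h3a : κ^(2*μ) = κ^(2*(μ-1)) * (κ * κ) := by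
    rw [show 2*μ = 2*(μ-1) + ((1:ℝ)+1) by ring, Real.rpow_add hκ, hkk]
  simp only [matern, hA]
  rw [show (μ-1)+1 = μ by ring, Real.Gamma_add_one hμ.ne', hzm, h2a, h3a]
  have hΓ : Real.Gamma μ ≠ 0 := (Real.Gamma_pos_of_pos hμ).ne'
  have hπ : π ≠ 0 := Real.pi_ne_zero
  have hk1 : κ^(2*(μ-1)) ≠ 0 := (Real.rpow_pos_of_pos hκ _).ne'
  have h21 : (2:ℝ)^(1-μ) ≠ 0 := (Real.rpow_pos_of_pos two_pos _).ne'
  field_simp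

abbrev Trm : Type := ℝ × ℕ × ℕ × ℕ

noncomputable def tval (κ φ ν : ℝ) (T : Trm) (y : E2) : ℝ :=
  T.1 * (y 0)^T.2.1 * (y 1)^T.2.2.1 * matern κ φ (ν - T.2.2.2) y

noncomputable def lval (κ φ ν : ℝ) (L : List Trm) (y : E2) : ℝ :=
  (L.map (fun T => tval κ φ ν T y)).sum

noncomputable def Dt0 (ν : ℝ) (T : Trm) : List Trm :=
  (if T.2.1 = 0 then [] else [(T.1 * (T.2.1 : ℝ), T.2.1 - 1, T.2.2.1, T.2.2.2)]) ++
  [(-T.1 * (2*(ν - T.2.2.2))⁻¹, T.2.1 + 1, T.2.2.1, T.2.2.2 + 1)]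

noncomputable def Dt1 (ν : ℝ) (T : Trm) : List Trm :=
  (if T.2.2.1 = 0 then [] else [(T.1 * (T.2.2.1 : ℝ), T.2.1, T.2.2.1 - 1, T.2.2.2)]) ++
  [(-T.1 * (2*(ν - T.2.2.2))⁻¹, T.2.1, T.2.2.1 + 1, T.2.2.2 + 1)]

noncomputable def Dt (ν : ℝ) (i : Fin 2) (T : Trm) : List Trm :=
  if i = 0 then Dt0 ν T else Dt1 ν T

noncomputable def DL (ν : ℝ) (i : Fin 2) (L : List Trm) : List Trm := L.flatMap (Dt ν i)
noncomputable def DL0 (ν : ℝ) (L : List Trm) : List Trm := L.flatMap (Dt0 ν)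
noncomputable def DL1 (ν : ℝ) (L : List Trm) : List Trm := L.flatMap (Dt1 ν)

lemma lval_cons (κ φ ν : ℝ) (T : Trm) (L : List Trm) (y : E2) :
    lval κ φ ν (T :: L) y = tval κ φ ν T y + lval κ φ ν L y := by
  simp [lval]

lemma lval_append (κ φ ν : ℝ) (L1 L2 : List Trm) (y : E2) :
    lval κ φ ν (L1 ++ L2) y = lval κ φ ν L1 y + lval κ φ ν L2 y := by
  simp [lval]

lemma tval_hasFDerivAt (κ φ ν : ℝ) (hκ : 0 < κ) (T : Trm)
    (hk : 0 < ν - (T.2.2.2 : ℝ)) (x : E2) (hx : x ≠ 0) :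
    ∃ F : E2 →L[ℝ] ℝ, HasFDerivAt (tval κ φ ν T) F x ∧
      ∀ i : Fin 2, F (EuclideanSpace.single i 1) = lval κ φ ν (Dt ν i T) x := by
  obtain ⟨c, a, b, k⟩ := T
  simp only at hk
  have hp0 : HasFDerivAt (fun y : E2 => y 0) (EuclideanSpace.proj (0 : Fin 2) : E2 →L[ℝ] ℝ) x := by
    exact (EuclideanSpace.proj (0 : Fin 2) : E2 →L[ℝ] ℝ).hasFDerivAt
  have hp1 : HasFDerivAt (fun y : E2 => y 1) (EuclideanSpace.proj (1 : Fin 2) : E2 →L[ℝ] ℝ) x := by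
    exact (EuclideanSpace.proj (1 : Fin 2) : E2 →L[ℝ] ℝ).hasFDerivAt
  have h0 : HasFDerivAt (fun y : E2 => (y 0)^a)
      (((a:ℝ) * (x 0)^(a-1)) • (EuclideanSpace.proj (0 : Fin 2) : E2 →L[ℝ] ℝ)) x :=
    (hasDerivAt_pow a (x 0)).comp_hasFDerivAt x hp0
  have h1 : HasFDerivAt (fun y : E2 => (y 1)^b)
      (((b:ℝ) * (x 1)^(b-1)) • (EuclideanSpace.proj (1 : Fin 2) : E2 →L[ℝ] ℝ)) x :=
    (hasDerivAt_pow b (x 1)).comp_hasFDerivAt x hp1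
  have hm := matern_hasFDerivAt κ φ (ν - k) hκ hk x hx
  have hcomb := ((h0.const_mul c).mul h1).mul hm
  refine ⟨_, hcomb, ?_⟩
  intro i
  have hcast : ν - (k:ℝ) - 1 = ν - ((k:ℕ) + 1 : ℕ) := by push_cast; ring
  fin_cases i
  · by_cases ha : a = 0
    · subst ha
      simp [lval, tval, Dt, Dt0, ContinuousLinearMap.add_apply, ContinuousLinearMap.coe_smul',
        Pi.smul_apply, smul_eq_mul, EuclideanSpace.single_apply, innerSL_apply_apply,
        EuclideanSpace.inner_single_right, ← hcast]
      ring_nf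
    · simp [lval, tval, Dt, Dt0, ha, ContinuousLinearMap.add_apply, ContinuousLinearMap.coe_smul',
        Pi.smul_apply, smul_eq_mul, EuclideanSpace.single_apply, innerSL_apply_apply,
        EuclideanSpace.inner_single_right, ← hcast]
      ring_nf
  · by_cases hb : b = 0
    · subst hb
      simp [lval, tval, Dt, Dt1, ContinuousLinearMap.add_apply, ContinuousLinearMap.coe_smul',
        Pi.smul_apply, smul_eq_mul, EuclideanSpace.single_apply, innerSL_apply_apply,
        EuclideanSpace.inner_single_right, ← hcast]
      ring_nf
    · simp [lval, tval, Dt, Dt1, hb, ContinuousLinearMap.add_apply, ContinuousLinearMap.coe_smul',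
        Pi.smul_apply, smul_eq_mul, EuclideanSpace.single_apply, innerSL_apply_apply,
        EuclideanSpace.inner_single_right, ← hcast]
      ring_nf

lemma lval_hasFDerivAt (κ φ ν : ℝ) (hκ : 0 < κ) (L : List Trm)
    (hL : ∀ T ∈ L, 0 < ν - (T.2.2.2 : ℝ)) (x : E2) (hx : x ≠ 0) :
    ∃ F : E2 →L[ℝ] ℝ, HasFDerivAt (lval κ φ ν L) F x ∧
      ∀ i : Fin 2, F (EuclideanSpace.single i 1) = lval κ φ ν (DL ν i L) x := by
  induction L with
  | nil =>
    refine ⟨0, ?_, ?_⟩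
    · exact (hasFDerivAt_const (0:ℝ) x).congr_of_eventuallyEq (Filter.Eventually.of_forall fun y => by simp [lval])
    · intro i; simp [DL, lval]
  | cons T L ih =>
    obtain ⟨F1, hF1, he1⟩ := tval_hasFDerivAt κ φ ν hκ T (hL T (List.mem_cons_self (a := T) (l := L))) x hx
    obtain ⟨F2, hF2, he2⟩ := ih (fun T' hT' => hL T' (List.mem_cons_of_mem _ hT'))
    refine ⟨F1 + F2, ?_, ?_⟩
    · have := hF1.add hF2
      apply this.congr_of_eventuallyEq
      filter_upwards with y
      simp [lval_cons]
    · intro i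
      have hDL : DL ν i (T :: L) = Dt ν i T ++ DL ν i L := by
        simp [DL]
      rw [ContinuousLinearMap.add_apply, he1 i, he2 i, hDL, lval_append]

lemma pderiv2_lval (κ φ ν : ℝ) (hκ : 0 < κ) (L : List Trm)
    (hL : ∀ T ∈ L, 0 < ν - (T.2.2.2 : ℝ)) (i : Fin 2) {x : E2} (hx : x ≠ 0) :
    pderiv2 i (lval κ φ ν L) x = lval κ φ ν (DL ν i L) x := by
  obtain ⟨F, hF, he⟩ := lval_hasFDerivAt κ φ ν hκ L hL x hx
  rw [pderiv2, hF.fderiv, he i]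

lemma pderiv2_congr (i : Fin 2) {f g : E2 → ℝ}
    (hfg : Set.EqOn f g {x : E2 | x ≠ 0}) :
    Set.EqOn (pderiv2 i f) (pderiv2 i g) {x : E2 | x ≠ 0} := by
  intro x hx
  have hopen : IsOpen {x : E2 | x ≠ 0} := isOpen_ne
  have hev : f =ᶠ[𝓝 x] g := Filter.eventuallyEq_of_mem (hopen.mem_nhds hx) hfg
  simp only [pderiv2]
  rw [hev.fderiv_eq]

lemma pderiv2_iter_congr (i : Fin 2) (n : ℕ) {f g : E2 → ℝ}
    (hfg : Set.EqOn f g {x : E2 | x ≠ 0}) :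
    Set.EqOn ((pderiv2 i)^[n] f) ((pderiv2 i)^[n] g) {x : E2 | x ≠ 0} := by
  induction n generalizing f g with
  | zero => simpa using hfg
  | succ n ih =>
    rw [Function.iterate_succ_apply, Function.iterate_succ_apply]
    exact ih (pderiv2_congr i hfg)

lemma Dt0_k_le (ν : ℝ) (T : Trm) : ∀ T' ∈ Dt0 ν T, T'.2.2.2 ≤ T.2.2.2 + 1 := by
  intro T' hT'
  unfold Dt0 at hT'
  rcases List.mem_append.mp hT' with h | h
  · split_ifs at h with hc
    · exact absurd h List.not_mem_nil
    · obtain rfl := List.mem_singleton.mp h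
      simp
  · obtain rfl := List.mem_singleton.mp h
    simp

lemma Dt1_k_le (ν : ℝ) (T : Trm) : ∀ T' ∈ Dt1 ν T, T'.2.2.2 ≤ T.2.2.2 + 1 := by
  intro T' hT'
  unfold Dt1 at hT'
  rcases List.mem_append.mp hT' with h | h
  · split_ifs at h with hc
    · exact absurd h List.not_mem_nil
    · obtain rfl := List.mem_singleton.mp h
      simp
  · obtain rfl := List.mem_singleton.mp h
    simp

lemma Dt_k_le (ν : ℝ) (i : Fin 2) (T : Trm) :
    ∀ T' ∈ Dt ν i T, T'.2.2.2 ≤ T.2.2.2 + 1 := by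
  intro T' hT'
  unfold Dt at hT'
  split_ifs at hT'
  · exact Dt0_k_le ν T T' hT'
  · exact Dt1_k_le ν T T' hT'

lemma pderiv2_iter_lval (κ φ ν : ℝ) (hκ : 0 < κ) (hν : (8:ℝ) < ν) (i : Fin 2) (n : ℕ)
    (L : List Trm) (hL : ∀ T ∈ L, T.2.2.2 + n ≤ 8) :
    Set.EqOn ((pderiv2 i)^[n] (lval κ φ ν L)) (lval κ φ ν ((DL ν i)^[n] L))
      {x : E2 | x ≠ 0} := by
  induction n generalizing L with
  | zero => simp [Set.EqOn]
  | succ n ih =>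
    have hL' : ∀ T ∈ L, 0 < ν - (T.2.2.2 : ℝ) := by
      intro T hT
      have := hL T hT
      have h7 : (T.2.2.2 : ℝ) ≤ 7 := by
        have : T.2.2.2 ≤ 7 := by omega
        exact_mod_cast this
      linarith
    have step : Set.EqOn (pderiv2 i (lval κ φ ν L)) (lval κ φ ν (DL ν i L))
        {x : E2 | x ≠ 0} := fun x hx => pderiv2_lval κ φ ν hκ L hL' i hx
    have hDLk : ∀ T ∈ DL ν i L, T.2.2.2 + n ≤ 8 := by
      intro T hT
      simp only [DL, List.mem_flatMap] at hT
      obtain ⟨T0, hT0, hTd⟩ := hT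
      have := Dt_k_le ν i T0 T hTd
      have := hL T0 hT0
      omega
    intro x hx
    rw [Function.iterate_succ_apply, Function.iterate_succ_apply]
    rw [pderiv2_iter_congr i n step hx]
    exact ih (DL ν i L) hDLk hx

lemma DL_iter_k (ν : ℝ) (i : Fin 2) (n : ℕ) :
    ∀ (m : ℕ) (L : List Trm), (∀ T ∈ L, T.2.2.2 + n + m ≤ 8) →
      ∀ T ∈ (DL ν i)^[n] L, T.2.2.2 + m ≤ 8 := by
  induction n with
  | zero => intro m L hL T hT; simp only [Function.iterate_zero, id_eq] at hT
            have := hL T hT; omega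
  | succ n ih =>
    intro m L hL T hT
    rw [Function.iterate_succ_apply] at hT
    refine ih m (DL ν i L) ?_ T hT
    intro T' hT'
    simp only [DL, List.mem_flatMap] at hT'
    obtain ⟨T0, hT0, hTd⟩ := hT'
    have := Dt_k_le ν i T0 T' hTd
    have := hL T0 hT0
    omega

lemma DL_zero_eq (ν : ℝ) : DL ν 0 = DL0 ν := rfl

lemma DL_one_eq (ν : ℝ) : DL ν 1 = DL1 ν := rfl

set_option maxHeartbeats 2000000 in
/-- Example 4 with `b₁ = b₂ = 0`, `B₁ = (1,0)^⊤`, `B₂ = (0,1)^⊤`: the eighth-order mixed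
partial derivative of the Matérn covariance satisfies
`∂⁸C_κ^ν/∂h₁⁴∂h₂⁴(h) = 9γ₄ C_κ^{ν−4}(h) − 18γ₅ (h₁²+h₂²) C_κ^{ν−5}(h)`
`+ 3γ₆ (h₁⁴+h₂⁴+12h₁²h₂²) C_κ^{ν−6}(h) − 6γ₇ h₁²h₂²(h₁²+h₂²) C_κ^{ν−7}(h)`
`+ γ₈ h₁⁴h₂⁴ C_κ^{ν−8}(h)`, where `γ_k = (2^k ∏_{i=0}^{k−1}(ν−i))⁻¹`. -/
theorem matern_mixed_eighth_partial (κ φ ν : ℝ) (hκ : 0 < κ) (hφ : 0 < φ) (hν : 8 < ν)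
    (h : EuclideanSpace ℝ (Fin 2)) (hh : h ≠ 0) :
    (pderiv2 0)^[4] ((pderiv2 1)^[4] (matern κ φ ν)) h
      = 9 * (2 ^ 4 * ∏ i ∈ Finset.range 4, (ν - i))⁻¹ * matern κ φ (ν - 4) h
        - 18 * (2 ^ 5 * ∏ i ∈ Finset.range 5, (ν - i))⁻¹ * (h 0 ^ 2 + h 1 ^ 2)
            * matern κ φ (ν - 5) h
        + 3 * (2 ^ 6 * ∏ i ∈ Finset.range 6, (ν - i))⁻¹
            * (h 0 ^ 4 + h 1 ^ 4 + 12 * h 0 ^ 2 * h 1 ^ 2) * matern κ φ (ν - 6) h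
        - 6 * (2 ^ 7 * ∏ i ∈ Finset.range 7, (ν - i))⁻¹
            * (h 0 ^ 2 * h 1 ^ 2 * (h 0 ^ 2 + h 1 ^ 2)) * matern κ φ (ν - 7) h
        + (2 ^ 8 * ∏ i ∈ Finset.range 8, (ν - i))⁻¹ * (h 0 ^ 4 * h 1 ^ 4)
            * matern κ φ (ν - 8) h := by
  have hU : h ∈ {x : E2 | x ≠ 0} := hh
  have hm : matern κ φ ν = lval κ φ ν [((1:ℝ), 0, 0, 0)] := by
    funext y; simp [lval, tval]
  have hL0 : ∀ T ∈ ([((1:ℝ), 0, 0, 0)] : List Trm), T.2.2.2 + 4 ≤ 8 := by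
    intro T hT
    obtain rfl := List.mem_singleton.mp hT
    norm_num
  have step1 : Set.EqOn ((pderiv2 1)^[4] (matern κ φ ν))
      (lval κ φ ν ((DL ν 1)^[4] [((1:ℝ), 0, 0, 0)])) {x : E2 | x ≠ 0} := by
    rw [hm]
    exact pderiv2_iter_lval κ φ ν hκ hν 1 4 _ hL0
  have step2 := pderiv2_iter_congr 0 4 step1
  have hk4 : ∀ T ∈ (DL ν 1)^[4] [((1:ℝ), 0, 0, 0)], T.2.2.2 + 4 ≤ 8 := by
    apply DL_iter_k ν 1 4 4
    intro T hT
    obtain rfl := List.mem_singleton.mp hT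
    norm_num
  have step3 := pderiv2_iter_lval κ φ ν hκ hν 0 4 _ hk4
  have key : (pderiv2 0)^[4] ((pderiv2 1)^[4] (matern κ φ ν)) h
      = lval κ φ ν ((DL ν 0)^[4] ((DL ν 1)^[4] [((1:ℝ), 0, 0, 0)])) h :=
    (step2 hU).trans (step3 hU)
  rw [key, DL_zero_eq, DL_one_eq]
  -- now a purely algebraic computation
  have e0 : ν ≠ 0 := by linarith
  have e1 : ν - (1:ℝ) ≠ 0 := ne_of_gt (by linarith)
  have e2 : ν - (2:ℝ) ≠ 0 := ne_of_gt (by linarith)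
  have e3 : ν - (3:ℝ) ≠ 0 := ne_of_gt (by linarith)
  have e4 : ν - (4:ℝ) ≠ 0 := ne_of_gt (by linarith)
  have e5 : ν - (5:ℝ) ≠ 0 := ne_of_gt (by linarith)
  have e6 : ν - (6:ℝ) ≠ 0 := ne_of_gt (by linarith)
  have e7 : ν - (7:ℝ) ≠ 0 := ne_of_gt (by linarith)
  have g4 : ((2:ℝ) ^ 4 * ∏ i ∈ Finset.range 4, (ν - (i:ℕ)))⁻¹
      = (2*ν)⁻¹ * (2*(ν-1))⁻¹ * (2*(ν-2))⁻¹ * (2*(ν-3))⁻¹ := by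
    simp only [Finset.prod_range_succ, Finset.prod_range_zero]
    push_cast
    field_simp
    ring
  have g5 : ((2:ℝ) ^ 5 * ∏ i ∈ Finset.range 5, (ν - (i:ℕ)))⁻¹
      = (2*ν)⁻¹ * (2*(ν-1))⁻¹ * (2*(ν-2))⁻¹ * (2*(ν-3))⁻¹ * (2*(ν-4))⁻¹ := by
    simp only [Finset.prod_range_succ, Finset.prod_range_zero]
    push_cast
    field_simp
    ring
  have g6 : ((2:ℝ) ^ 6 * ∏ i ∈ Finset.range 6, (ν - (i:ℕ)))⁻¹
      = (2*ν)⁻¹ * (2*(ν-1))⁻¹ * (2*(ν-2))⁻¹ * (2*(ν-3))⁻¹ * (2*(ν-4))⁻¹ * (2*(ν-5))⁻¹ := by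
    simp only [Finset.prod_range_succ, Finset.prod_range_zero]
    push_cast
    field_simp
    ring
  have g7 : ((2:ℝ) ^ 7 * ∏ i ∈ Finset.range 7, (ν - (i:ℕ)))⁻¹
      = (2*ν)⁻¹ * (2*(ν-1))⁻¹ * (2*(ν-2))⁻¹ * (2*(ν-3))⁻¹ * (2*(ν-4))⁻¹ * (2*(ν-5))⁻¹
        * (2*(ν-6))⁻¹ := by
    simp only [Finset.prod_range_succ, Finset.prod_range_zero]
    push_cast
    field_simp
    ring
  have g8 : ((2:ℝ) ^ 8 * ∏ i ∈ Finset.range 8, (ν - (i:ℕ)))⁻¹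
      = (2*ν)⁻¹ * (2*(ν-1))⁻¹ * (2*(ν-2))⁻¹ * (2*(ν-3))⁻¹ * (2*(ν-4))⁻¹ * (2*(ν-5))⁻¹
        * (2*(ν-6))⁻¹ * (2*(ν-7))⁻¹ := by
    simp only [Finset.prod_range_succ, Finset.prod_range_zero]
    push_cast
    field_simp
    ring
  rw [g4, g5, g6, g7, g8]
  simp only [Function.iterate_succ, Function.iterate_zero, Function.comp_apply, id_eq,
    DL0, DL1, Dt0, Dt1, List.flatMap_cons, List.flatMap_nil, List.nil_append, List.cons_append,
    List.append_nil, reduceIte, Nat.reduceAdd, Nat.reduceSub, Nat.add_eq, Nat.sub_self,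
    OfNat.ofNat_ne_zero, Nat.succ_ne_self]
  norm_num [lval, tval]
  ring
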